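/- arXiv:1309.2083 — 2 statements merged into one kernel-verified Lean document; each statement's English description precedes it below -/
import Mathlib

section
/- For every real number a > 0, the iterated integral 4·∫_1^∞ (1/s)·( ∫_0^1 exp(−a·s/(1−r²))·r/(1−r²)² dr ) ds equals (2/a)·exp(−a) − 2·∫_1^∞ exp(−a·s)/s ds. -/
open MeasureTheory Real Filter

/-- `x² ≤ 4 eˣ` for `x ≥ 0`. -/
lemma sq_le_four_exp (x : ℝ) (hx : 0 ≤ x) : x ^ 2 ≤ 4 * Real.exp x := by
  have h1 : x / 2 + 1 ≤ Real.exp (x / 2) := Real.add_one_le_exp _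
  have h2 : Real.exp (x / 2) * Real.exp (x / 2) = Real.exp x := by
    rw [← Real.exp_add]; ring_nf
  nlinarith [Real.exp_pos (x / 2)]

/-- Pointwise bound for the inner integrand. -/
lemma inner_bound (c : ℝ) (hc : 0 < c) {r : ℝ} (hr : r ∈ Set.Ioo (0:ℝ) 1) :
    Real.exp (-c / (1 - r ^ 2)) * r / (1 - r ^ 2) ^ 2 ≤ 4 / c ^ 2 := by
  obtain ⟨hr0, hr1⟩ := hr
  have ht : 0 < 1 - r ^ 2 := by nlinarith
  set t := 1 - r ^ 2 with htdef
  have key : (c / t) ^ 2 ≤ 4 * Real.exp (c / t) := sq_le_four_exp _ (div_pos hc ht).le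
  have key' : c ^ 2 ≤ 4 * Real.exp (c / t) * t ^ 2 := by
    rw [div_pow] at key
    have := (div_le_iff₀ (by positivity : (0:ℝ) < t ^ 2)).mp key
    linarith
  have hE1 : 0 < Real.exp (-c / t) := Real.exp_pos _
  have hmul : Real.exp (-c / t) * Real.exp (c / t) = 1 := by
    rw [← Real.exp_add, neg_div, neg_add_cancel, Real.exp_zero]
  have h3 : Real.exp (-c / t) * (4 * Real.exp (c / t) * t ^ 2) = 4 * t ^ 2 := by
    calc Real.exp (-c / t) * (4 * Real.exp (c / t) * t ^ 2)
        = 4 * t ^ 2 * (Real.exp (-c / t) * Real.exp (c / t)) := by ring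
      _ = 4 * t ^ 2 := by rw [hmul, mul_one]
  have h2 : Real.exp (-c / t) * c ^ 2 ≤ 4 * t ^ 2 := by
    have := mul_le_mul_of_nonneg_left key' hE1.le
    linarith
  rw [div_le_div_iff₀ (by positivity) (by positivity)]
  nlinarith [h2, mul_nonneg (mul_pos hE1 (pow_pos hc 2)).le (by linarith : (0:ℝ) ≤ 1 - r)]

/-- The inner integral: substitution `u = 1/(1-r²)` in closed form. -/
lemma inner_integral (c : ℝ) (hc : 0 < c) :
    ∫ r in Set.Ioo (0:ℝ) 1, Real.exp (-c / (1 - r ^ 2)) * r / (1 - r ^ 2) ^ 2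
      = Real.exp (-c) / (2 * c) := by
  set f' : ℝ → ℝ := fun r => Real.exp (-c / (1 - r ^ 2)) * r / (1 - r ^ 2) ^ 2 with hf'def
  set f : ℝ → ℝ := fun r => -(Real.exp (-c / (1 - r ^ 2)) / (2 * c)) with hfdef
  have hnonneg : ∀ r ∈ Set.Ioo (0:ℝ) 1, 0 ≤ f' r := by
    intro r hr
    exact div_nonneg (mul_nonneg (Real.exp_pos _).le hr.1.le) (sq_nonneg _)
  have hmeas : AEStronglyMeasurable f' volume := by
    apply Measurable.aestronglyMeasurable
    fun_prop
  have hbdd : ∀ᵐ x ∂(volume.restrict (Set.Ioo (0:ℝ) 1)), ‖f' x‖ ≤ 4 / c ^ 2 := by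
    rw [ae_restrict_iff' measurableSet_Ioo]
    filter_upwards with r hr
    rw [Real.norm_eq_abs, abs_of_nonneg (hnonneg r hr)]
    exact inner_bound c hc hr
  have hint : IntegrableOn f' (Set.Ioo (0:ℝ) 1) :=
    Measure.integrableOn_of_bounded (by simp) hmeas hbdd
  have hderiv : ∀ r ∈ Set.Ioo (0:ℝ) 1, HasDerivAt f (f' r) r := by
    intro r hr
    obtain ⟨h0, h1⟩ := hr
    have ht : (1 : ℝ) - r ^ 2 ≠ 0 := by nlinarith
    have d1 : HasDerivAt (fun x : ℝ => 1 - x ^ 2) (-(2 * r)) r := by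
      simpa using (hasDerivAt_pow 2 r).const_sub 1
    have d2 := ((d1.inv ht).const_mul (-c)).exp
    have d4 := (d2.div_const (2 * c)).neg
    have hfeq : f = fun x : ℝ => -(Real.exp (-c * (1 - x ^ 2)⁻¹) / (2 * c)) := by
      funext x
      rw [hfdef]
      simp [neg_div, div_eq_mul_inv]
    rw [hfeq, hf'def]
    refine d4.congr_deriv ?_
    simp only [div_eq_mul_inv, neg_mul, Pi.inv_apply]
    have ht2 : ((1:ℝ) - r ^ 2) ^ 2 ≠ 0 := pow_ne_zero 2 ht
    field_simp
  have hlim1 : Tendsto f (nhdsWithin 1 (Set.Iio 1)) (nhds 0) := by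
    have h1 : Tendsto (fun r : ℝ => 1 - r ^ 2) (nhdsWithin 1 (Set.Iio 1))
        (nhdsWithin 0 (Set.Ioi 0)) := by
      apply tendsto_nhdsWithin_iff.mpr
      constructor
      · apply Tendsto.mono_left _ nhdsWithin_le_nhds
        have : Continuous (fun r : ℝ => 1 - r ^ 2) := by continuity
        simpa using this.tendsto 1
      · filter_upwards [Ioo_mem_nhdsLT_of_mem (by norm_num : (1:ℝ) ∈ Set.Ioc 0 1)] with r hr
        obtain ⟨h0, h1'⟩ := hr
        have : 0 < 1 - r ^ 2 := by nlinarith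
        exact this
    have h2 : Tendsto (fun t : ℝ => c * t⁻¹) (nhdsWithin 0 (Set.Ioi 0)) atTop :=
      (tendsto_inv_nhdsGT_zero).const_mul_atTop hc
    have h3 : Tendsto (fun r : ℝ => -c / (1 - r ^ 2)) (nhdsWithin 1 (Set.Iio 1)) atBot := by
      have hcomp := h2.comp h1
      have heq : (fun r : ℝ => -c / (1 - r ^ 2))
          = fun r => -((fun t : ℝ => c * t⁻¹) ((fun r : ℝ => 1 - r ^ 2) r)) := by
        funext r; simp [neg_div, div_eq_mul_inv]
      rw [heq]
      exact tendsto_neg_atBot_iff.mpr hcomp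
    have h4 : Tendsto (fun r : ℝ => Real.exp (-c / (1 - r ^ 2)))
        (nhdsWithin 1 (Set.Iio 1)) (nhds 0) := Real.tendsto_exp_atBot.comp h3
    have := (h4.div_const (2 * c)).neg
    simpa using this
  have hlim0 : Tendsto f (nhdsWithin 0 (Set.Ioi 0)) (nhds (-(Real.exp (-c) / (2 * c)))) := by
    apply Tendsto.mono_left _ nhdsWithin_le_nhds
    have hcont : ContinuousAt f 0 := by
      apply ContinuousAt.neg
      apply ContinuousAt.div_const
      apply Real.continuous_exp.continuousAt.comp
      exact (continuousAt_const.div (by fun_prop) (by norm_num))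
    have := hcont.tendsto
    simpa [hfdef] using this
  have key := intervalIntegral.integral_eq_sub_of_hasDerivAt_of_tendsto (f := f) (f' := f')
    (by norm_num : (0:ℝ) < 1) hderiv
    ((intervalIntegrable_iff_integrableOn_Ioo_of_le (by norm_num)).mpr hint)
    hlim0 hlim1
  rw [intervalIntegral.integral_of_le (by norm_num : (0:ℝ) ≤ 1),
    MeasureTheory.integral_Ioc_eq_integral_Ioo] at key
  rw [key]
  ring

lemma int1 (a : ℝ) (ha : 0 < a) :
    IntegrableOn (fun s : ℝ => Real.exp (-(a * s)) / s) (Set.Ioi 1) := by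
  apply Integrable.mono (exp_neg_integrableOn_Ioi 1 ha)
  · apply Measurable.aestronglyMeasurable; fun_prop
  · rw [ae_restrict_iff' measurableSet_Ioi]
    filter_upwards with s hs
    have hs1 : (1:ℝ) < s := hs
    rw [Real.norm_eq_abs, Real.norm_eq_abs, abs_of_nonneg (by positivity),
      abs_of_nonneg (Real.exp_pos _).le]
    calc Real.exp (-(a * s)) / s ≤ Real.exp (-(a * s)) / 1 := by
          apply div_le_div_of_nonneg_left (Real.exp_pos _).le
          · norm_num
          · linarith
      _ = Real.exp (-a * s) := by rw [div_one, neg_mul]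

lemma int2 (a : ℝ) (ha : 0 < a) :
    IntegrableOn (fun s : ℝ => Real.exp (-(a * s)) / s ^ 2) (Set.Ioi 1) := by
  apply Integrable.mono (exp_neg_integrableOn_Ioi 1 ha)
  · apply Measurable.aestronglyMeasurable; fun_prop
  · rw [ae_restrict_iff' measurableSet_Ioi]
    filter_upwards with s hs
    have hs1 : (1:ℝ) < s := hs
    rw [Real.norm_eq_abs, Real.norm_eq_abs, abs_of_nonneg (by positivity),
      abs_of_nonneg (Real.exp_pos _).le]
    calc Real.exp (-(a * s)) / s ^ 2 ≤ Real.exp (-(a * s)) / 1 := by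
          apply div_le_div_of_nonneg_left (Real.exp_pos _).le
          · norm_num
          · nlinarith
      _ = Real.exp (-a * s) := by rw [div_one, neg_mul]

/-- Integration by parts on `(1,∞)`. -/
lemma outer_parts (a : ℝ) (ha : 0 < a) :
    ∫ s in Set.Ioi (1:ℝ), Real.exp (-(a * s)) / s ^ 2
      = Real.exp (-a) - a * ∫ s in Set.Ioi (1:ℝ), Real.exp (-(a * s)) / s := by
  set g : ℝ → ℝ := fun s => -(Real.exp (-(a * s)) / s) with hgdef
  set g' : ℝ → ℝ := fun s => a * (Real.exp (-(a * s)) / s) + Real.exp (-(a * s)) / s ^ 2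
    with hg'def
  have hderiv : ∀ s ∈ Set.Ici (1:ℝ), HasDerivAt g (g' s) s := by
    intro s hs
    have hs0 : s ≠ 0 := by intro h; simp [h] at hs; linarith [hs]
    have d1 : HasDerivAt (fun x : ℝ => Real.exp (-(a * x))) (Real.exp (-(a * s)) * (-a)) s := by
      have : HasDerivAt (fun x : ℝ => -(a * x)) (-a) s := by
        simpa using (hasDerivAt_id s).const_mul (-a)
      simpa using this.exp
    have d2 := (d1.div (hasDerivAt_id s) hs0).neg
    rw [hgdef, hg'def]
    refine d2.congr_deriv ?_
    simp only [id_eq]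
    field_simp
    ring
  have hgint : IntegrableOn g' (Set.Ioi 1) :=
    ((int1 a ha).const_mul a).add (int2 a ha)
  have hlim : Tendsto g atTop (nhds 0) := by
    have h1 : Tendsto (fun s : ℝ => Real.exp (-(a * s))) atTop (nhds 0) := by
      apply Real.tendsto_exp_atBot.comp
      apply tendsto_neg_atBot_iff.mpr
      exact Tendsto.const_mul_atTop ha tendsto_id
    have h2 : Tendsto (fun s : ℝ => s⁻¹) atTop (nhds 0) := tendsto_inv_atTop_zero
    have heq : g = fun s => -(Real.exp (-(a * s)) * s⁻¹) := by
      funext s; simp [hgdef, div_eq_mul_inv]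
    rw [heq]
    simpa using (h1.mul h2).neg
  have key := MeasureTheory.integral_Ioi_of_hasDerivAt_of_tendsto'
    (f := g) (f' := g') hderiv hgint hlim
  have hg1 : g 1 = -(Real.exp (-a)) := by
    rw [hgdef]; simp
  rw [hg1] at key
  have hsplit : ∫ s in Set.Ioi (1:ℝ), g' s
      = a * (∫ s in Set.Ioi (1:ℝ), Real.exp (-(a * s)) / s)
        + ∫ s in Set.Ioi (1:ℝ), Real.exp (-(a * s)) / s ^ 2 := by
    rw [hg'def]
    rw [MeasureTheory.integral_add ((int1 a ha).const_mul a) (int2 a ha)]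
    rw [MeasureTheory.integral_const_mul]
  rw [hsplit] at key
  linarith [key]

/-- The iterated integral evaluating `I_φ(y,η)` for `y` of negative hermitian norm. -/
theorem Iphi_iterated_neg (a : ℝ) (ha : 0 < a) :
    4 * (∫ s in Set.Ioi (1 : ℝ), (1 / s) *
        ∫ r in Set.Ioo (0 : ℝ) 1, Real.exp (-a * s / (1 - r ^ 2)) * r / (1 - r ^ 2) ^ 2)
      = (2 / a) * Real.exp (-a) - 2 * ∫ s in Set.Ioi (1 : ℝ), Real.exp (-a * s) / s := by
  have h1 : Set.EqOn
      (fun s : ℝ => (1 / s) *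
        ∫ r in Set.Ioo (0 : ℝ) 1, Real.exp (-a * s / (1 - r ^ 2)) * r / (1 - r ^ 2) ^ 2)
      (fun s : ℝ => (1 / (2 * a)) * (Real.exp (-(a * s)) / s ^ 2)) (Set.Ioi 1) := by
    intro s hs
    have hs1 : (1:ℝ) < s := hs
    have hcs : 0 < a * s := by positivity
    have hinner : ∫ r in Set.Ioo (0 : ℝ) 1,
        Real.exp (-a * s / (1 - r ^ 2)) * r / (1 - r ^ 2) ^ 2
        = Real.exp (-(a * s)) / (2 * (a * s)) := by
      have := inner_integral (a * s) hcs
      simpa [neg_mul] using this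
    simp only [hinner]
    have hs0 : s ≠ 0 := by linarith
    field_simp
  rw [MeasureTheory.setIntegral_congr_fun measurableSet_Ioi h1,
    MeasureTheory.integral_const_mul, outer_parts a ha]
  have hJ : ∫ s in Set.Ioi (1:ℝ), Real.exp (-a * s) / s
      = ∫ s in Set.Ioi (1:ℝ), Real.exp (-(a * s)) / s := by
    simp [neg_mul]
  rw [hJ]
  have ha' : a ≠ 0 := ne_of_gt ha
  field_simp
  ring
end

section
/- Let k = ℚ(√Δ) be an imaginary quadratic field with Δ < 0 a squarefree even integer, O_k its ring of integers, and for N ≥ 1 let ρ(N) denote the number of nonzero ideals of O_k of absolute norm N. Let D be a squarefree positive integer every prime factor of which is inert in k. Suppose χ : ℕ → ℤ is completely multiplicative and satisfies, for every prime p: χ(p) = 1 if p is split in k, χ(p) = 0 if p is ramified in k, and χ(p) = −1 if p is inert in k. Then for every integer m > 0: the sum of ρ(m/ν) over the positive divisors ν of D which also divide m equals the sum of χ(a) over the positive divisors a of m that are coprime to D. -/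
open NumberField Ideal Polynomial Module Finset ArithmeticFunction
open scoped ArithmeticFunction.zeta

set_option maxHeartbeats 1000000
set_option synthInstance.maxHeartbeats 1000000

section RhoAux
variable {K : Type*} [Field K] [NumberField K]

lemma aux_finrank_two {Δ : ℤ} (hΔneg : Δ < 0) (α : K) (hα : α ^ 2 = (Δ : K))
    (hgen : Algebra.adjoin ℚ {α} = ⊤) : Module.finrank ℚ K = 2 := by
  have hint : IsIntegral ℚ α := IsIntegral.of_finite ℚ α
  have htop : IntermediateField.adjoin ℚ {α} = ⊤ := by
    apply IntermediateField.toSubalgebra_injective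
    rw [IntermediateField.adjoin_simple_toSubalgebra_of_isAlgebraic hint.isAlgebraic, hgen,
      IntermediateField.top_toSubalgebra]
  have hroot : (Polynomial.aeval α) (X ^ 2 - C (Δ : ℚ)) = 0 := by
    simp [hα]
  have hdeg2 : (X ^ 2 - C (Δ : ℚ)).natDegree = 2 := Polynomial.natDegree_X_pow_sub_C
  have hq0 : (X ^ 2 - C (Δ : ℚ)) ≠ 0 := by
    intro h
    rw [h] at hdeg2
    simp at hdeg2
  have hdvd := minpoly.dvd ℚ α hroot
  have hle : (minpoly ℚ α).natDegree ≤ 2 := hdeg2 ▸ Polynomial.natDegree_le_of_dvd hdvd hq0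
  have hpos : 0 < (minpoly ℚ α).natDegree := minpoly.natDegree_pos hint
  have hne1 : (minpoly ℚ α).natDegree ≠ 1 := by
    intro h1
    have hdeg1 : (minpoly ℚ α).degree = 1 := by
      rw [Polynomial.degree_eq_natDegree (minpoly.ne_zero hint), h1]
      rfl
    obtain ⟨q, hq⟩ := minpoly.degree_eq_one_iff.mp hdeg1
    have heq : (algebraMap ℚ K) (q ^ 2) = (algebraMap ℚ K) ((Δ : ℚ)) := by
      rw [map_pow, hq, hα]
      simp [map_intCast]
    have hq2 : q ^ 2 = (Δ : ℚ) := (algebraMap ℚ K).injective heq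
    have h0 : (0 : ℚ) ≤ q ^ 2 := sq_nonneg q
    rw [hq2] at h0
    have : (0 : ℤ) ≤ Δ := by exact_mod_cast h0
    omega
  have hdeg : (minpoly ℚ α).natDegree = 2 := by omega
  calc Module.finrank ℚ K = Module.finrank ℚ (⊤ : IntermediateField ℚ K) :=
        (IntermediateField.finrank_top').symm
    _ = Module.finrank ℚ (IntermediateField.adjoin ℚ {α}) := by rw [htop]
    _ = 2 := by rw [IntermediateField.adjoin.finrank hint, hdeg]


lemma aux_norm_span (hrank : Module.finrank ℚ K = 2) (n : ℕ) :
    absNorm (span {(n : 𝓞 K)} : Ideal (𝓞 K)) = n ^ 2 := by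
  have hcard : Fintype.card (Module.Free.ChooseBasisIndex ℤ (𝓞 K)) = 2 := by
    rw [← Module.finrank_eq_card_chooseBasisIndex, RingOfIntegers.rank, hrank]
  have h1 : (n : 𝓞 K) = algebraMap ℤ (𝓞 K) (n : ℤ) := by push_cast; rfl
  rw [absNorm_span_singleton, h1,
    Algebra.norm_algebraMap_of_basis (Module.Free.chooseBasis ℤ (𝓞 K)), hcard]
  simp [Int.natAbs_pow]


lemma aux_tri (hrank : Module.finrank ℚ K = 2) {p : ℕ} (hp : p.Prime) :
    (span {(p : 𝓞 K)} : Ideal (𝓞 K)).IsPrime ∨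
    (∃ P : Ideal (𝓞 K), P.IsPrime ∧ absNorm P = p ∧ span {(p : 𝓞 K)} = P ^ 2) ∨
    (∃ P Q : Ideal (𝓞 K), P.IsPrime ∧ Q.IsPrime ∧ P ≠ Q ∧ absNorm P = p ∧
      absNorm Q = p ∧ span {(p : 𝓞 K)} = P * Q) := by
  set I : Ideal (𝓞 K) := span {(p : 𝓞 K)} with hI
  have hnorm : absNorm I = p ^ 2 := aux_norm_span hrank p
  have hn0 : absNorm I ≠ 0 := by rw [hnorm]; exact pow_ne_zero 2 hp.ne_zero
  have hIbot : I ≠ 0 := by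
    intro h
    rw [h, Ideal.zero_eq_bot, absNorm_bot] at hn0
    exact hn0 rfl
  have hIunit : ¬ IsUnit I := by
    rw [Ideal.isUnit_iff]
    intro h
    rw [h, absNorm_top] at hnorm
    have := hp.one_lt
    nlinarith [hnorm]
  by_cases hprime : I.IsPrime
  · exact Or.inl hprime
  right
  obtain ⟨P, hPirr, hPdvd⟩ := WfDvdMonoid.exists_irreducible_factor hIunit hIbot
  have hPprime : Prime P := UniqueFactorizationMonoid.irreducible_iff_prime.mp hPirr
  obtain ⟨J, hJ⟩ := hPdvd
  have hnormmul : absNorm P * absNorm J = p ^ 2 := by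
    rw [← _root_.map_mul, ← hJ, hnorm]
  have hP1 : absNorm P ≠ 1 := by
    simp only [Ne, absNorm_eq_one_iff]
    intro h
    exact hPprime.not_unit (Ideal.isUnit_iff.mpr h)
  have hJ1 : absNorm J ≠ 1 := by
    simp only [Ne, absNorm_eq_one_iff]
    intro h
    rw [h, Ideal.mul_top] at hJ
    exact hprime (hJ ▸ Ideal.isPrime_of_prime hPprime)
  have hPn : absNorm P = p ∧ absNorm J = p := by
    have hdvdP : absNorm P ∣ p ^ 2 := ⟨absNorm J, hnormmul.symm⟩
    obtain ⟨k, hk2, hk⟩ := (Nat.dvd_prime_pow hp).mp hdvdP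
    interval_cases k
    · rw [pow_zero] at hk
      exact absurd hk hP1
    · rw [pow_one] at hk
      refine ⟨hk, ?_⟩
      rw [hk] at hnormmul
      have : p * absNorm J = p * p := by rw [hnormmul, sq]
      exact Nat.eq_of_mul_eq_mul_left hp.pos this
    · exfalso
      rw [hk] at hnormmul
      have hpp : 0 < p ^ 2 := pow_pos hp.pos 2
      have : absNorm J = 1 := by
        have h' : p ^ 2 * absNorm J = p ^ 2 * 1 := by rw [mul_one, hnormmul]
        exact Nat.eq_of_mul_eq_mul_left hpp h'
      exact hJ1 this
  obtain ⟨hPn, hJn⟩ := hPn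
  have hJprime : J.IsPrime := isPrime_of_irreducible_absNorm (by
    rw [hJn]; exact (Nat.irreducible_iff_nat_prime _).mpr hp)
  by_cases hPJ : P = J
  · exact Or.inl ⟨P, Ideal.isPrime_of_prime hPprime, hPn, by rw [hJ, hPJ, sq]⟩
  · exact Or.inr ⟨P, J, Ideal.isPrime_of_prime hPprime, hJprime, hPJ, hPn, hJn, hJ⟩


lemma aux_ne_bot {I : Ideal (𝓞 K)} {n : ℕ} (hn : n ≠ 0) (h : absNorm I = n) : I ≠ ⊥ := by
  intro hb
  rw [hb, absNorm_bot] at h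
  exact hn h.symm


lemma aux_mem_dvd {I : Ideal (𝓞 K)} {p e : ℕ} (h : absNorm I = p ^ e) :
    I ∣ (span {(p : 𝓞 K)} : Ideal (𝓞 K)) ^ e := by
  have hmem := absNorm_mem I
  rw [h] at hmem
  rw [Ideal.span_singleton_pow, Ideal.dvd_iff_le, Ideal.span_singleton_le_iff_mem]
  push_cast at hmem ⊢
  exact hmem


lemma aux_card_inert (hrank : Module.finrank ℚ K = 2) {p : ℕ} (hp : p.Prime)
    (hin : (span {(p : 𝓞 K)} : Ideal (𝓞 K)).IsPrime) (e : ℕ) :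
    Nat.card {I : Ideal (𝓞 K) // I ≠ ⊥ ∧ absNorm I = p ^ e} = if 2 ∣ e then 1 else 0 := by
  set P : Ideal (𝓞 K) := span {(p : 𝓞 K)} with hP
  have hnorm : absNorm P = p ^ 2 := aux_norm_span hrank p
  have hPbot : P ≠ ⊥ := aux_ne_bot (pow_ne_zero 2 hp.ne_zero) hnorm
  have hPr : Prime P := (Ideal.prime_iff_isPrime hPbot).mpr hin
  have key : ∀ I : Ideal (𝓞 K), I ≠ ⊥ → absNorm I = p ^ e → ∃ i, 2 * i = e ∧ I = P ^ i := by
    intro I hIb hIn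
    obtain ⟨i, hie, hassoc⟩ := (dvd_prime_pow hPr e).mp (aux_mem_dvd hIn)
    rw [associated_iff_eq] at hassoc
    refine ⟨i, ?_, hassoc⟩
    have : absNorm I = p ^ (2 * i) := by
      rw [hassoc, _root_.map_pow, hnorm, ← pow_mul, mul_comm]
    rw [hIn] at this
    exact (Nat.pow_right_injective hp.two_le this).symm
  rw [show Nat.card {I : Ideal (𝓞 K) // I ≠ ⊥ ∧ absNorm I = p ^ e}
      = ({I : Ideal (𝓞 K) | I ≠ ⊥ ∧ absNorm I = p ^ e}).ncard from
      Nat.card_coe_set_eq _]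
  split_ifs with he
  · obtain ⟨t, rfl⟩ := he
    have hset : {I : Ideal (𝓞 K) | I ≠ ⊥ ∧ absNorm I = p ^ (2 * t)} = {P ^ t} := by
      ext I
      simp only [Set.mem_setOf_eq, Set.mem_singleton_iff]
      constructor
      · rintro ⟨hIb, hIn⟩
        obtain ⟨i, hie, rfl⟩ := key I hIb hIn
        have : i = t := by omega
        rw [this]
      · rintro rfl
        refine ⟨?_, ?_⟩
        · have : P ^ t ≠ (0 : Ideal (𝓞 K)) :=
            pow_ne_zero t (by rwa [Ne, Ideal.zero_eq_bot])
          rwa [Ideal.zero_eq_bot] at this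
        · rw [_root_.map_pow, hnorm, ← pow_mul, mul_comm]
    rw [hset, Set.ncard_singleton]
  · have hset : {I : Ideal (𝓞 K) | I ≠ ⊥ ∧ absNorm I = p ^ e} = ∅ := by
      ext I
      simp only [Set.mem_setOf_eq, Set.mem_empty_iff_false, iff_false, not_and]
      intro hIb hIn
      obtain ⟨i, hie, -⟩ := key I hIb hIn
      exact he ⟨i, hie.symm⟩
    rw [hset, Set.ncard_empty]


lemma aux_card_ram (hrank : Module.finrank ℚ K = 2) {p : ℕ} (hp : p.Prime)
    {P : Ideal (𝓞 K)} (hPp : P.IsPrime) (hPn : absNorm P = p)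
    (hsq : span {(p : 𝓞 K)} = P ^ 2) (e : ℕ) :
    Nat.card {I : Ideal (𝓞 K) // I ≠ ⊥ ∧ absNorm I = p ^ e} = 1 := by
  have hPbot : P ≠ ⊥ := aux_ne_bot hp.ne_zero hPn
  have hPr : Prime P := (Ideal.prime_iff_isPrime hPbot).mpr hPp
  rw [show Nat.card {I : Ideal (𝓞 K) // I ≠ ⊥ ∧ absNorm I = p ^ e}
      = ({I : Ideal (𝓞 K) | I ≠ ⊥ ∧ absNorm I = p ^ e}).ncard from
      Nat.card_coe_set_eq _]
  have hset : {I : Ideal (𝓞 K) | I ≠ ⊥ ∧ absNorm I = p ^ e} = {P ^ e} := by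
    ext I
    simp only [Set.mem_setOf_eq, Set.mem_singleton_iff]
    constructor
    · rintro ⟨hIb, hIn⟩
      have hdvd : I ∣ P ^ (2 * e) := by
        have h' := aux_mem_dvd hIn
        rwa [hsq, ← pow_mul] at h'
      obtain ⟨i, hie, hassoc⟩ := (dvd_prime_pow hPr _).mp hdvd
      rw [associated_iff_eq] at hassoc
      subst hassoc
      have hnI : p ^ i = p ^ e := by
        rw [← hIn, _root_.map_pow, hPn]
      rw [Nat.pow_right_injective hp.two_le hnI]
    · rintro rfl
      refine ⟨?_, by rw [_root_.map_pow, hPn]⟩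
      have : P ^ e ≠ (0 : Ideal (𝓞 K)) :=
        pow_ne_zero e (by rwa [Ne, Ideal.zero_eq_bot])
      rwa [Ideal.zero_eq_bot] at this
  rw [hset, Set.ncard_singleton]


lemma aux_card_split (hrank : Module.finrank ℚ K = 2) {p : ℕ} (hp : p.Prime)
    {P Q : Ideal (𝓞 K)} (hPp : P.IsPrime) (hQp : Q.IsPrime) (hne : P ≠ Q)
    (hPn : absNorm P = p) (hQn : absNorm Q = p)
    (hspl : span {(p : 𝓞 K)} = P * Q) (e : ℕ) :
    Nat.card {I : Ideal (𝓞 K) // I ≠ ⊥ ∧ absNorm I = p ^ e} = e + 1 := by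
  have hPbot : P ≠ ⊥ := aux_ne_bot hp.ne_zero hPn
  have hQbot : Q ≠ ⊥ := aux_ne_bot hp.ne_zero hQn
  have hPr : Prime P := (Ideal.prime_iff_isPrime hPbot).mpr hPp
  have hQr : Prime Q := (Ideal.prime_iff_isPrime hQbot).mpr hQp
  have hP0 : P ≠ (0 : Ideal (𝓞 K)) := by rwa [Ne, Ideal.zero_eq_bot]
  have hQ0 : Q ≠ (0 : Ideal (𝓞 K)) := by rwa [Ne, Ideal.zero_eq_bot]
  rw [show Nat.card {I : Ideal (𝓞 K) // I ≠ ⊥ ∧ absNorm I = p ^ e}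
      = ({I : Ideal (𝓞 K) | I ≠ ⊥ ∧ absNorm I = p ^ e}).ncard from
      Nat.card_coe_set_eq _]
  have hset : {I : Ideal (𝓞 K) | I ≠ ⊥ ∧ absNorm I = p ^ e}
      = (fun i : ℕ => P ^ i * Q ^ (e - i)) '' ↑(Finset.Iic e) := by
    ext I
    simp only [Set.mem_setOf_eq, Set.mem_image, Finset.coe_Iic, Set.mem_Iic]
    constructor
    · rintro ⟨hIb, hIn⟩
      have hdvd : I ∣ P ^ e * Q ^ e := by
        have h' := aux_mem_dvd hIn
        rwa [hspl, mul_pow] at h'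
      obtain ⟨I₁, I₂, h1, h2, rfl⟩ := exists_dvd_and_dvd_of_dvd_mul hdvd
      obtain ⟨i, hie, hi⟩ := (dvd_prime_pow hPr _).mp h1
      obtain ⟨j, hje, hj⟩ := (dvd_prime_pow hQr _).mp h2
      rw [associated_iff_eq] at hi hj
      subst hi; subst hj
      have hije : i + j = e := by
        have : p ^ (i + j) = p ^ e := by
          rw [← hIn, _root_.map_mul, _root_.map_pow, _root_.map_pow, hPn, hQn, pow_add]
        exact Nat.pow_right_injective hp.two_le this
      exact ⟨i, by omega, by rw [show e - i = j by omega]⟩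
    · rintro ⟨i, hie, rfl⟩
      constructor
      · have : P ^ i * Q ^ (e - i) ≠ (0 : Ideal (𝓞 K)) :=
          mul_ne_zero (pow_ne_zero _ hP0) (pow_ne_zero _ hQ0)
        rwa [Ideal.zero_eq_bot] at this
      · rw [_root_.map_mul, _root_.map_pow, _root_.map_pow, hPn, hQn, ← pow_add,
          Nat.add_sub_cancel' hie]
  rw [hset, Set.ncard_image_of_injOn, Set.ncard_coe_finset, Nat.card_Iic]
  -- injectivity
  have key : ∀ a b : ℕ, a ≤ e → b ≤ e → a < b → P ^ a * Q ^ (e - a) = P ^ b * Q ^ (e - b) → False := by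
    intro a b ha hb hlt hab
    have h1 : P ^ a * Q ^ (e - a) = P ^ a * (P ^ (b - a) * Q ^ (e - b)) := by
      rw [hab, ← mul_assoc, ← pow_add, show a + (b - a) = b by omega]
    have h2 : Q ^ (e - a) = P ^ (b - a) * Q ^ (e - b) :=
      mul_left_cancel₀ (pow_ne_zero a hP0) h1
    have h3 : Q ^ (e - b) * Q ^ (b - a) = Q ^ (e - b) * P ^ (b - a) := by
      rw [← pow_add, show e - b + (b - a) = e - a by omega, h2, mul_comm]
    have h4 : Q ^ (b - a) = P ^ (b - a) := mul_left_cancel₀ (pow_ne_zero _ hQ0) h3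
    have hPdvd : P ∣ Q ^ (b - a) := by
      rw [h4]
      exact dvd_pow_self P (by omega)
    exact hne (associated_iff_eq.mp (hPr.associated_of_dvd hQr (hPr.dvd_of_dvd_pow hPdvd)))
  intro a ha b hb hab
  simp only [Finset.coe_Iic, Set.mem_Iic] at ha hb
  simp only at hab
  rcases Nat.lt_trichotomy a b with h | h | h
  · exact absurd (key a b ha hb h hab) not_false
  · exact h
  · exact absurd (key b a hb ha h hab.symm) not_false


lemma aux_sup_top {a b : ℕ} (hab : a.Coprime b) {I : Ideal (𝓞 K)}
    (hbI : ((b : ℕ) : 𝓞 K) ∈ I) : span {(a : 𝓞 K)} ⊔ I = ⊤ := by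
  rw [eq_top_iff_one]
  obtain ⟨u, v, huv⟩ := (Nat.isCoprime_iff_coprime.mpr hab : IsCoprime (a : ℤ) (b : ℤ))
  have h1 : ((1 : ℤ) : 𝓞 K) = ((u : ℤ) : 𝓞 K) * (a : 𝓞 K) + ((v : ℤ) : 𝓞 K) * (b : 𝓞 K) := by
    rw [← huv]
    push_cast
    ring
  rw [show (1 : 𝓞 K) = ((u : ℤ) : 𝓞 K) * (a : 𝓞 K) + ((v : ℤ) : 𝓞 K) * (b : 𝓞 K) by
    exact_mod_cast h1]
  exact Submodule.add_mem_sup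
    (Ideal.mul_mem_left _ _ (Ideal.mem_span_singleton_self _))
    (Ideal.mul_mem_left _ _ hbI)

-- recomposition: (I₁ * I₂) ⊔ span{a} = I₁

lemma aux_recomp {a b : ℕ} (hab : a.Coprime b) {I₁ I₂ : Ideal (𝓞 K)}
    (h₁ : absNorm I₁ = a) (h₂ : absNorm I₂ = b) :
    (I₁ * I₂) ⊔ span {(a : 𝓞 K)} = I₁ := by
  have haI₁ : ((a : ℕ) : 𝓞 K) ∈ I₁ := h₁ ▸ absNorm_mem I₁
  have hbI₂ : ((b : ℕ) : 𝓞 K) ∈ I₂ := h₂ ▸ absNorm_mem I₂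
  apply le_antisymm
  · exact sup_le Ideal.mul_le_left ((Ideal.span_singleton_le_iff_mem _).mpr haI₁)
  · have htop : span {(a : 𝓞 K)} ⊔ I₂ = ⊤ := aux_sup_top hab hbI₂
    calc I₁ = I₁ * (span {(a : 𝓞 K)} ⊔ I₂) := by rw [htop, Ideal.mul_top]
      _ = I₁ * span {(a : 𝓞 K)} ⊔ I₁ * I₂ := Ideal.mul_sup _ _ _
      _ ≤ span {(a : 𝓞 K)} ⊔ I₁ * I₂ := sup_le_sup_right Ideal.mul_le_right _
      _ = (I₁ * I₂) ⊔ span {(a : 𝓞 K)} := sup_comm _ _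

-- decomposition: I = (I ⊔ span{a}) * (I ⊔ span{b})

lemma aux_decomp {a b : ℕ} (hab : a.Coprime b) {I : Ideal (𝓞 K)}
    (hIn : absNorm I = a * b) :
    I = (I ⊔ span {(a : 𝓞 K)}) * (I ⊔ span {(b : 𝓞 K)}) := by
  have habI : ((a * b : ℕ) : 𝓞 K) ∈ I := hIn ▸ absNorm_mem I
  have htop : (I ⊔ span {(a : 𝓞 K)}) ⊔ (I ⊔ span {(b : 𝓞 K)}) = ⊤ := by
    rw [eq_top_iff]
    calc (⊤ : Ideal (𝓞 K)) = span {(a : 𝓞 K)} ⊔ span {(b : 𝓞 K)} := by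
          rw [aux_sup_top hab (Ideal.mem_span_singleton_self _)]
      _ ≤ (I ⊔ span {(a : 𝓞 K)}) ⊔ (I ⊔ span {(b : 𝓞 K)}) :=
          sup_le_sup le_sup_right le_sup_right
  apply le_antisymm
  · rw [Ideal.mul_eq_inf_of_coprime htop]
    exact le_inf le_sup_left le_sup_left
  · rw [Ideal.sup_mul, Ideal.mul_sup, Ideal.mul_sup]
    refine sup_le (sup_le Ideal.mul_le_left Ideal.mul_le_left)
      (sup_le Ideal.mul_le_right ?_)
    rw [Ideal.span_singleton_mul_span_singleton]
    rw [Ideal.span_singleton_le_iff_mem]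
    push_cast at habI ⊢
    exact habI


lemma aux_norm_sup {a b : ℕ} (ha : a ≠ 0) (hb : b ≠ 0) (hab : a.Coprime b)
    (hrank : ∀ n : ℕ, absNorm (span {(n : 𝓞 K)} : Ideal (𝓞 K)) = n ^ 2)
    {I : Ideal (𝓞 K)} (hIn : absNorm I = a * b) :
    absNorm (I ⊔ span {(a : 𝓞 K)}) = a ∧ absNorm (I ⊔ span {(b : 𝓞 K)}) = b := by
  set d₁ := absNorm (I ⊔ span {(a : 𝓞 K)}) with hd₁
  set d₂ := absNorm (I ⊔ span {(b : 𝓞 K)}) with hd₂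
  have hda : d₁ ∣ a := by
    have h1 : d₁ ∣ a * b := hIn ▸ absNorm_dvd_absNorm_of_le le_sup_left
    have h2 : d₁ ∣ a * a := by
      have := absNorm_dvd_absNorm_of_le (le_sup_right :
        span {(a : 𝓞 K)} ≤ I ⊔ span {(a : 𝓞 K)})
      rw [hrank a, sq] at this
      exact this
    have := Nat.dvd_gcd h1 h2
    rwa [Nat.gcd_mul_left, Nat.Coprime.gcd_eq_one hab.symm, mul_one] at this
  have hdb : d₂ ∣ b := by
    have h1 : d₂ ∣ a * b := hIn ▸ absNorm_dvd_absNorm_of_le le_sup_left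
    have h2 : d₂ ∣ b * b := by
      have := absNorm_dvd_absNorm_of_le (le_sup_right :
        span {(b : 𝓞 K)} ≤ I ⊔ span {(b : 𝓞 K)})
      rw [hrank b, sq] at this
      exact this
    have := Nat.dvd_gcd h1 h2
    rwa [mul_comm a b, Nat.gcd_mul_left, Nat.Coprime.gcd_eq_one hab, mul_one] at this
  have hprod : d₁ * d₂ = a * b := by
    rw [hd₁, hd₂, ← _root_.map_mul Ideal.absNorm, ← aux_decomp hab hIn, hIn]
  obtain ⟨x, hx⟩ := hda
  have hd₁0 : d₁ ≠ 0 := by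
    intro h
    rw [h, zero_mul] at hprod
    exact (Nat.mul_ne_zero ha hb) hprod.symm
  have hbd₂ : b ∣ d₂ := by
    have : d₁ * d₂ = d₁ * (x * b) := by
      rw [hprod, hx]; ring
    have h' := Nat.eq_of_mul_eq_mul_left (Nat.pos_of_ne_zero hd₁0) this
    exact ⟨x, by rw [h', mul_comm]⟩
  have hd₂b : d₂ = b := Nat.dvd_antisymm hdb hbd₂
  refine ⟨?_, hd₂b⟩
  have h'' : d₁ * b = a * b := hd₂b ▸ hprod
  exact Nat.eq_of_mul_eq_mul_right (Nat.pos_of_ne_zero hb) h''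


lemma aux_card_mul (hrank : ∀ n : ℕ, absNorm (span {(n : 𝓞 K)} : Ideal (𝓞 K)) = n ^ 2)
    {a b : ℕ} (ha : a ≠ 0) (hb : b ≠ 0) (hab : a.Coprime b) :
    Nat.card {I : Ideal (𝓞 K) // I ≠ ⊥ ∧ absNorm I = a * b}
      = Nat.card {I : Ideal (𝓞 K) // I ≠ ⊥ ∧ absNorm I = a}
        * Nat.card {I : Ideal (𝓞 K) // I ≠ ⊥ ∧ absNorm I = b} := by
  have e : {I : Ideal (𝓞 K) // I ≠ ⊥ ∧ absNorm I = a * b}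
      ≃ {I : Ideal (𝓞 K) // I ≠ ⊥ ∧ absNorm I = a}
        × {I : Ideal (𝓞 K) // I ≠ ⊥ ∧ absNorm I = b} := by
    refine
      { toFun := fun I => (⟨I.1 ⊔ span {(a : 𝓞 K)}, ?_, (aux_norm_sup ha hb hab hrank I.2.2).1⟩,
          ⟨I.1 ⊔ span {(b : 𝓞 K)}, ?_, (aux_norm_sup ha hb hab hrank I.2.2).2⟩),
        invFun := fun J => ⟨J.1.1 * J.2.1, ?_, by
          rw [_root_.map_mul Ideal.absNorm, J.1.2.2, J.2.2.2]⟩,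
        left_inv := ?_, right_inv := ?_ }
    · exact aux_ne_bot ha (aux_norm_sup ha hb hab hrank I.2.2).1
    · exact aux_ne_bot hb (aux_norm_sup ha hb hab hrank I.2.2).2
    · exact aux_ne_bot (Nat.mul_ne_zero ha hb) (by rw [_root_.map_mul Ideal.absNorm, J.1.2.2, J.2.2.2])
    · rintro ⟨I, hIb, hIn⟩
      exact Subtype.ext (aux_decomp hab hIn).symm
    · rintro ⟨⟨I₁, hI₁b, hI₁n⟩, ⟨I₂, hI₂b, hI₂n⟩⟩
      refine Prod.ext (Subtype.ext ?_) (Subtype.ext ?_)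
      · exact aux_recomp hab hI₁n hI₂n
      · have h := aux_recomp hab.symm hI₂n hI₁n
        rwa [mul_comm I₂ I₁] at h
  rw [Nat.card_congr e, Nat.card_prod]


end RhoAux

/-- The paper's key counting lemma: with `k = ℚ(√Δ)` (`Δ < 0` even squarefree),
`ρ(N)` the number of nonzero ideals of `O_k` of norm `N`, `D` squarefree with all
prime factors inert in `k`, and `χ` the quadratic character of `k`, one has
`∑_{ν ∣ D, ν ∣ m} ρ(m/ν) = ∑_{a ∣ m, (a,D)=1} χ(a)` for every `m > 0`. -/
theorem rho_divisor_sum_eq_character_sum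
    (Δ : ℤ) (hΔneg : Δ < 0) (hΔsq : Squarefree Δ) (hΔeven : Even Δ)
    (K : Type*) [Field K] [NumberField K]
    (α : K) (hα : α ^ 2 = (Δ : K)) (hgen : Algebra.adjoin ℚ {α} = ⊤)
    (D : ℕ) (hD : 0 < D) (hDsq : Squarefree D)
    (hDinert : ∀ p : ℕ, p.Prime → p ∣ D → (Ideal.span {(p : 𝓞 K)}).IsPrime)
    (χ : ℕ → ℤ) (hχ1 : χ 1 = 1) (hχmul : ∀ m n : ℕ, χ (m * n) = χ m * χ n)
    (hsplit : ∀ p : ℕ, p.Prime →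
      (∃ P Q : Ideal (𝓞 K), P.IsPrime ∧ Q.IsPrime ∧ P ≠ Q ∧
        Ideal.span {(p : 𝓞 K)} = P * Q) → χ p = 1)
    (hram : ∀ p : ℕ, p.Prime →
      (∃ P : Ideal (𝓞 K), P.IsPrime ∧ Ideal.span {(p : 𝓞 K)} = P ^ 2) → χ p = 0)
    (hinert : ∀ p : ℕ, p.Prime →
      (Ideal.span {(p : 𝓞 K)}).IsPrime → χ p = -1)
    (m : ℕ) (hm : 0 < m) :
    (∑ ν ∈ D.divisors.filter (· ∣ m),
        (Nat.card {I : Ideal (𝓞 K) // I ≠ ⊥ ∧ Ideal.absNorm I = m / ν} : ℤ))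
      = ∑ a ∈ m.divisors.filter (fun a => Nat.Coprime a D), χ a := by
  classical
  have hrank : Module.finrank ℚ K = 2 := aux_finrank_two hΔneg α hα hgen
  have hns : ∀ n : ℕ, absNorm (span {(n : 𝓞 K)} : Ideal (𝓞 K)) = n ^ 2 :=
    aux_norm_span hrank
  have hχpow : ∀ n i : ℕ, χ (n ^ i) = χ n ^ i := by
    intro n i
    induction i with
    | zero => simpa using hχ1
    | succ k ih => rw [pow_succ, hχmul, ih, pow_succ]
  -- the arithmetic functions
  let f : ArithmeticFunction ℤ :=
    ⟨fun n => (Nat.card {I : Ideal (𝓞 K) // I ≠ ⊥ ∧ Ideal.absNorm I = n} : ℤ), by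
      haveI : IsEmpty {I : Ideal (𝓞 K) // I ≠ ⊥ ∧ Ideal.absNorm I = 0} :=
        ⟨fun I => I.2.1 (Ideal.absNorm_eq_zero_iff.mp I.2.2)⟩
      simp [Nat.card_of_isEmpty]⟩
  let X : ArithmeticFunction ℤ := ⟨fun n => if n = 0 then 0 else χ n, by simp⟩
  let ψ : ArithmeticFunction ℤ :=
    ⟨fun n => if n = 0 then 0 else if n.Coprime D then χ n else 0, by simp⟩
  let δ : ArithmeticFunction ℤ := ⟨fun n => if n ≠ 0 ∧ n ∣ D then 1 else 0, by simp⟩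
  have hfapp : ∀ n, f n = (Nat.card {I : Ideal (𝓞 K) // I ≠ ⊥ ∧ Ideal.absNorm I = n} : ℤ) :=
    fun n => rfl
  have hXapp : ∀ n, X n = if n = 0 then 0 else χ n := fun n => rfl
  have hψapp : ∀ n, ψ n = if n = 0 then 0 else if n.Coprime D then χ n else 0 := fun n => rfl
  have hδapp : ∀ n, δ n = if n ≠ 0 ∧ n ∣ D then 1 else 0 := fun n => rfl
  -- multiplicativity
  have hXm : X.IsMultiplicative := by
    rw [ArithmeticFunction.IsMultiplicative.iff_ne_zero]
    refine ⟨by rw [hXapp]; simpa using hχ1, ?_⟩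
    intro a b ha hb _
    rw [hXapp, hXapp, hXapp, if_neg (Nat.mul_ne_zero ha hb), if_neg ha, if_neg hb, hχmul]
  have hψm : ψ.IsMultiplicative := by
    rw [ArithmeticFunction.IsMultiplicative.iff_ne_zero]
    refine ⟨by rw [hψapp]; simpa [Nat.coprime_one_left] using hχ1, ?_⟩
    intro a b ha hb _
    rw [hψapp, hψapp, hψapp, if_neg (Nat.mul_ne_zero ha hb), if_neg ha, if_neg hb]
    have hiff : (a * b).Coprime D ↔ a.Coprime D ∧ b.Coprime D := Nat.coprime_mul_iff_left
    by_cases hca : a.Coprime D <;> by_cases hcb : b.Coprime D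
    · rw [if_pos (hiff.mpr ⟨hca, hcb⟩), if_pos hca, if_pos hcb, hχmul]
    · rw [if_neg (fun h => hcb (hiff.mp h).2), if_pos hca, if_neg hcb, mul_zero]
    · rw [if_neg (fun h => hca (hiff.mp h).1), if_neg hca, zero_mul]
    · rw [if_neg (fun h => hca (hiff.mp h).1), if_neg hca, zero_mul]
  have hδm : δ.IsMultiplicative := by
    rw [ArithmeticFunction.IsMultiplicative.iff_ne_zero]
    refine ⟨by rw [hδapp]; simp, ?_⟩
    intro a b ha hb hab
    rw [hδapp, hδapp, hδapp]
    have hiff : a * b ∣ D ↔ a ∣ D ∧ b ∣ D := by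
      constructor
      · intro h
        exact ⟨(dvd_mul_right a b).trans h, (dvd_mul_left b a).trans h⟩
      · rintro ⟨h1, h2⟩
        exact hab.mul_dvd_of_dvd_of_dvd h1 h2
    by_cases h1 : a ∣ D <;> by_cases h2 : b ∣ D <;>
      simp [ha, hb, Nat.mul_ne_zero ha hb, hiff, h1, h2]
  have hfm : f.IsMultiplicative := by
    rw [ArithmeticFunction.IsMultiplicative.iff_ne_zero]
    constructor
    · rw [hfapp]
      have htb : (⊤ : Ideal (𝓞 K)) ≠ ⊥ := by
        intro h
        have h1 : absNorm (⊤ : Ideal (𝓞 K)) = 1 := absNorm_top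
        rw [h, absNorm_bot] at h1
        exact one_ne_zero h1.symm
      have hset : {I : Ideal (𝓞 K) | I ≠ ⊥ ∧ absNorm I = 1} = {⊤} := by
        ext I
        simp only [Set.mem_setOf_eq, Set.mem_singleton_iff, Ideal.absNorm_eq_one_iff]
        exact ⟨fun h => h.2, fun h => ⟨h ▸ htb, h⟩⟩
      rw [show Nat.card {I : Ideal (𝓞 K) // I ≠ ⊥ ∧ absNorm I = 1}
          = ({I : Ideal (𝓞 K) | I ≠ ⊥ ∧ absNorm I = 1}).ncard from Nat.card_coe_set_eq _,
        hset, Set.ncard_singleton]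
      rfl
    · intro a b ha hb hab
      rw [hfapp, hfapp, hfapp, aux_card_mul hns ha hb hab]
      push_cast
      ring
  -- f agrees with X * ζ
  have hgpp : ∀ (p e : ℕ), p.Prime →
      (X * (ζ : ArithmeticFunction ℤ)) (p ^ e) = ∑ i ∈ range (e + 1), χ p ^ i := by
    intro p e hp
    rw [ArithmeticFunction.coe_mul_zeta_apply, Nat.sum_divisors_prime_pow hp]
    refine Finset.sum_congr rfl fun i _ => ?_
    rw [hXapp, if_neg (pow_ne_zero i hp.ne_zero), hχpow]
  have hfg : f = X * (ζ : ArithmeticFunction ℤ) := by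
    rw [ArithmeticFunction.IsMultiplicative.eq_iff_eq_on_prime_powers f hfm _
      (hXm.mul ArithmeticFunction.isMultiplicative_zeta.natCast)]
    intro p i hp
    rw [hgpp p i hp, hfapp]
    rcases aux_tri hrank hp with hin | ⟨P, hPp, hPn, hsq⟩ | ⟨P, Q, hPp, hQp, hne, hPn, hQn, hspl⟩
    · rw [aux_card_inert hrank hp hin i, hinert p hp hin, neg_one_geom_sum]
      have hiff : Even (i + 1) ↔ ¬ (2 ∣ i) := by
        rw [Nat.even_add_one, Nat.even_iff, Nat.dvd_iff_mod_eq_zero]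
      by_cases h2 : 2 ∣ i
      · rw [if_pos h2, if_neg (by rw [hiff]; exact not_not_intro h2)]
        norm_num
      · rw [if_neg h2, if_pos (hiff.mpr h2)]
        norm_num
    · rw [aux_card_ram hrank hp hPp hPn hsq i, hram p hp ⟨P, hPp, hsq⟩, zero_geom_sum,
        if_neg (Nat.succ_ne_zero i)]
      norm_num
    · rw [aux_card_split hrank hp hPp hQp hne hPn hQn hspl i,
        hsplit p hp ⟨P, Q, hPp, hQp, hne, hspl⟩]
      simp
  -- δ * (X * ζ) = ψ * ζ
  have hDind : ∀ (p i : ℕ), p.Prime → 2 ≤ i → ¬ (p ^ i ∣ D) := by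
    intro p i hp hi h
    have hpp : p * p ∣ D := by
      refine dvd_trans ?_ h
      have : p * p = p ^ 2 := (sq p).symm
      rw [this]
      exact pow_dvd_pow p hi
    exact hp.one_lt.ne' (Nat.isUnit_iff.mp (hDsq p hpp))
  have hmulform : ∀ n : ℕ, (δ * (X * (ζ : ArithmeticFunction ℤ))) n
      = ∑ d ∈ n.divisors, δ d * (X * (ζ : ArithmeticFunction ℤ)) (n / d) := by
    intro n
    rw [ArithmeticFunction.mul_apply]
    exact Nat.sum_divisorsAntidiagonal (fun x y => δ x * (X * (ζ : ArithmeticFunction ℤ)) y)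
  have hkey : δ * (X * (ζ : ArithmeticFunction ℤ)) = ψ * (ζ : ArithmeticFunction ℤ) := by
    rw [ArithmeticFunction.IsMultiplicative.eq_iff_eq_on_prime_powers _
      (hδm.mul (hXm.mul ArithmeticFunction.isMultiplicative_zeta.natCast)) _
      (hψm.mul ArithmeticFunction.isMultiplicative_zeta.natCast)]
    intro p e hp
    rw [hmulform, Nat.sum_divisors_prime_pow hp, ArithmeticFunction.coe_mul_zeta_apply,
      Nat.sum_divisors_prime_pow hp]
    by_cases hpD : p ∣ D
    · -- p inert, divides D
      have hχp : χ p = -1 := hinert p hp (hDinert p hp hpD)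
      have hgval : ∀ j : ℕ, (X * (ζ : ArithmeticFunction ℤ)) (p ^ j)
          = if 2 ∣ j then 1 else 0 := by
        intro j
        rw [hgpp p j hp, hχp, neg_one_geom_sum]
        have hiff : Even (j + 1) ↔ ¬ (2 ∣ j) := by
          rw [Nat.even_add_one, Nat.even_iff, Nat.dvd_iff_mod_eq_zero]
        by_cases h2 : 2 ∣ j
        · rw [if_pos h2, if_neg (by rw [hiff]; exact not_not_intro h2)]
        · rw [if_neg h2, if_pos (hiff.mpr h2)]
      have hψval : ∀ i : ℕ, 1 ≤ i → ψ (p ^ i) = 0 := by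
        intro i hi
        rw [hψapp, if_neg (pow_ne_zero i hp.ne_zero)]
        rw [if_neg]
        intro hcop
        have hpg : p ∣ Nat.gcd (p ^ i) D :=
          Nat.dvd_gcd (dvd_pow_self p (by omega)) hpD
        rw [Nat.Coprime] at hcop
        rw [hcop] at hpg
        exact hp.one_lt.ne' (Nat.dvd_one.mp hpg)
      cases e with
      | zero =>
        have h1 : ∀ g : ℕ → ℤ, ∑ i ∈ Finset.range (0 + 1), g i = g 0 := by
          intro g; simp
        rw [h1, h1, pow_zero, Nat.div_one, hδapp,
          if_pos ⟨one_ne_zero, one_dvd D⟩, one_mul, hψapp, if_neg one_ne_zero,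
          if_pos (Nat.coprime_one_left D)]
        rw [ArithmeticFunction.mul_apply_one, hXapp, if_neg one_ne_zero, hχ1, one_mul]
        simp [ArithmeticFunction.natCoe_apply]
      | succ e' =>
        rw [Finset.sum_range_succ', Finset.sum_range_succ']
        have hzero : ∀ i ∈ Finset.range e',
            δ (p ^ (i + 1 + 1)) * (X * (ζ : ArithmeticFunction ℤ)) (p ^ (e' + 1) / p ^ (i + 1 + 1)) = 0 := by
          intro i _
          rw [hδapp, if_neg, zero_mul]
          rintro ⟨-, hdvd⟩
          exact hDind p (i + 2) hp (by omega) hdvd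
        rw [Finset.sum_eq_zero hzero, zero_add]
        have hd1 : δ (p ^ (0 + 1)) = 1 := by
          rw [hδapp, if_pos ⟨pow_ne_zero 1 hp.ne_zero, by simpa using hpD⟩]
        have hd0 : δ (p ^ 0) = 1 := by
          rw [hδapp]
          simp
        have hdiv1 : p ^ (e' + 1) / p ^ (0 + 1) = p ^ e' := by
          rw [Nat.pow_div (by omega) hp.pos]
          norm_num
        have hdiv0 : p ^ (e' + 1) / p ^ 0 = p ^ (e' + 1) := by
          simp
        rw [hd1, hd0, hdiv1, hdiv0, one_mul, one_mul, hgval, hgval]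
        -- RHS : ∑ ψ (p^i) over range (e'+2)
        rw [Finset.sum_range_succ']
        have hzero' : ∀ i ∈ Finset.range (e' + 1), ψ (p ^ (i + 1)) = 0 := by
          intro i _
          exact hψval (i + 1) (by omega)
        rw [Finset.sum_eq_zero hzero', zero_add, pow_zero, hψapp, if_neg one_ne_zero,
          if_pos (Nat.coprime_one_left D), hχ1]
        by_cases h2 : 2 ∣ e'
        · rw [if_pos h2, if_neg (by omega)]
          norm_num
        · rw [if_neg h2, if_pos (by omega)]
          norm_num
    · -- p does not divide D
      have hcop : ∀ i : ℕ, (p ^ i).Coprime D :=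
        fun i => Nat.Coprime.pow_left i (hp.coprime_iff_not_dvd.mpr hpD)
      have hterm : ∀ i ∈ Finset.range (e + 1),
          δ (p ^ i) * (X * (ζ : ArithmeticFunction ℤ)) (p ^ e / p ^ i)
          = if i = 0 then (X * (ζ : ArithmeticFunction ℤ)) (p ^ e) else 0 := by
        intro i _
        rcases Nat.eq_zero_or_pos i with rfl | hi
        · rw [hδapp]
          simp
        · rw [hδapp, if_neg, zero_mul, if_neg (by omega)]
          rintro ⟨-, hdvd⟩
          exact hpD ((dvd_pow_self p (by omega : i ≠ 0)).trans hdvd)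
      rw [Finset.sum_congr rfl hterm, Finset.sum_ite_eq' (Finset.range (e + 1)) 0,
        if_pos (Finset.mem_range.mpr (by omega))]
      rw [hgpp p e hp]
      refine Finset.sum_congr rfl fun i _ => ?_
      rw [hψapp, if_neg (pow_ne_zero i hp.ne_zero), if_pos (hcop i), hχpow]
  -- final assembly
  have hsets : D.divisors.filter (· ∣ m) = m.divisors.filter (· ∣ D) := by
    ext ν
    simp only [Finset.mem_filter, Nat.mem_divisors]
    constructor
    · rintro ⟨⟨h1, -⟩, h2⟩
      exact ⟨⟨h2, hm.ne'⟩, h1⟩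
    · rintro ⟨⟨h1, -⟩, h2⟩
      exact ⟨⟨h2, hD.ne'⟩, h1⟩
  calc (∑ ν ∈ D.divisors.filter (· ∣ m),
        (Nat.card {I : Ideal (𝓞 K) // I ≠ ⊥ ∧ Ideal.absNorm I = m / ν} : ℤ))
      = ∑ ν ∈ m.divisors.filter (· ∣ D), f (m / ν) := by
        rw [hsets]
        exact Finset.sum_congr rfl fun ν _ => (hfapp (m / ν)).symm
    _ = ∑ ν ∈ m.divisors, δ ν * f (m / ν) := by
        rw [Finset.sum_filter]
        refine Finset.sum_congr rfl fun ν hν => ?_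
        have hν0 : ν ≠ 0 := Nat.pos_of_mem_divisors hν |>.ne'
        by_cases hd : ν ∣ D
        · rw [if_pos hd, hδapp, if_pos ⟨hν0, hd⟩, one_mul]
        · rw [if_neg hd, hδapp, if_neg (by tauto), zero_mul]
    _ = (δ * f) m := by
        rw [ArithmeticFunction.mul_apply]
        exact (Nat.sum_divisorsAntidiagonal (fun x y => δ x * f y)).symm
    _ = (ψ * (ζ : ArithmeticFunction ℤ)) m := by rw [hfg, hkey]
    _ = ∑ a ∈ m.divisors, ψ a := ArithmeticFunction.coe_mul_zeta_apply
    _ = ∑ a ∈ m.divisors.filter (fun a => Nat.Coprime a D), χ a := by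
        rw [Finset.sum_filter]
        refine Finset.sum_congr rfl fun a ha => ?_
        have ha0 : a ≠ 0 := Nat.pos_of_mem_divisors ha |>.ne'
        rw [hψapp, if_neg ha0]
end
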